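/- Let Ṡ = ∏_{j=1}^m X_j − p_1(1 + ∑_{j=1}^m μ_j^{-1}Ẋ_j) and ε_3 = (1/2)∏_{j=1}^m X_j(X_j−1)(X_j−2) − (3/2)(∏_{j=1}^m X_j)(∏_{j=1}^m X_j(X_j−1)) + (∏_{j=1}^m X_j)³. Then E[Ṡ ε_3] = (1/2)p_1³∏_{j=1}^m(3+μ_j) − (3/2)p_1²∏_{j=1}^m(4+5μ_j+μ_j²) + p_1∏_{j=1}^m(1+7μ_j+6μ_j²+μ_j³) − (1/2)p_1⁴ + (3/2)p_1³∏_{j=1}^m(2+μ_j) − p_1²∏_{j=1}^m(1+3μ_j+μ_j²) − (3/2)p_1⁴ s_1 + (3/2)p_1³∑_{j=1}^m μ_j^{-1}(4+3μ_j)∏_{k≠j}(2+μ_k) − p_1²∑_{j=1}^m μ_j^{-1}(1+6μ_j+3μ_j²)∏_{k≠j}(1+3μ_k+μ_k²). -/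

import Mathlib

open MeasureTheory ProbabilityTheory Finset
open scoped NNReal

/-- The law of `m` independent Poisson random variables `X_j ~ Poisson (μ j)`,
as a product measure on `Fin m → ℕ`. -/
noncomputable def poissonPi {m : ℕ} (μ : Fin m → ℝ≥0) : Measure (Fin m → ℕ) :=
  Measure.pi fun j => poissonMeasure (μ j)

section PoissonAux

open scoped ENNReal

lemma hasSum_poisson_df (μ : ℝ≥0) (k : ℕ) :
    HasSum (fun n => poissonPMFReal μ n * (n.descFactorial k : ℝ)) ((μ : ℝ) ^ k) := by
  have h0 : ∑ i ∈ Finset.range k, poissonPMFReal μ i * (i.descFactorial k : ℝ) = 0 := by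
    apply Finset.sum_eq_zero
    intro i hi
    rw [Nat.descFactorial_eq_zero_iff_lt.mpr (Finset.mem_range.mp hi)]
    simp
  have key : HasSum (fun n => poissonPMFReal μ (n + k) * ((n + k).descFactorial k : ℝ))
      ((μ : ℝ) ^ k) := by
    have hexp : HasSum (fun n : ℕ => (μ : ℝ) ^ n / n.factorial) (Real.exp μ) := by
      rw [Real.exp_eq_exp_ℝ]
      exact NormedSpace.expSeries_div_hasSum_exp (μ : ℝ)
    have := hexp.mul_left (Real.exp (-(μ : ℝ)) * (μ : ℝ) ^ k)
    have heq : (fun n : ℕ => Real.exp (-(μ : ℝ)) * (μ : ℝ) ^ k * ((μ : ℝ) ^ n / n.factorial))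
        = fun n => poissonPMFReal μ (n + k) * ((n + k).descFactorial k : ℝ) := by
      funext n
      have hdf : (n.factorial : ℝ) * ((n + k).descFactorial k : ℝ) = ((n + k).factorial : ℝ) := by
        rw [← Nat.cast_mul, ← Nat.factorial_mul_descFactorial (Nat.le_add_left k n)]
        simp
      have hfac : ((n + k).factorial : ℝ) ≠ 0 := Nat.cast_ne_zero.mpr (Nat.factorial_ne_zero _)
      have hfac' : (n.factorial : ℝ) ≠ 0 := Nat.cast_ne_zero.mpr (Nat.factorial_ne_zero _)
      unfold poissonPMFReal
      field_simp
      rw [pow_add]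
      linear_combination (-((μ : ℝ) ^ k * (μ : ℝ) ^ n)) * hdf
    rw [heq] at this
    rw [show Real.exp (-(μ : ℝ)) * (μ : ℝ) ^ k * Real.exp μ
        = (μ : ℝ) ^ k * (Real.exp (-(μ : ℝ)) * Real.exp μ) by ring, ← Real.exp_add] at this
    simpa only [neg_add_cancel, Real.exp_zero, mul_one] using this
  have := (hasSum_nat_add_iff (f := fun n => poissonPMFReal μ n * (n.descFactorial k : ℝ)) k).mp key
  rwa [h0, add_zero] at this

lemma poissonMeasure_singleton (μ : ℝ≥0) (n : ℕ) :
    poissonMeasure μ {n} = ENNReal.ofReal (poissonPMFReal μ n) := by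
  rw [ProbabilityTheory.poissonMeasure_singleton]
  rfl

lemma integrable_poisson_of_nonneg (μ : ℝ≥0) (f : ℕ → ℝ) (hpos : ∀ n, 0 ≤ f n)
    (hsum : Summable (fun n => poissonPMFReal μ n * f n)) :
    Integrable f (poissonMeasure μ) := by
  refine ⟨Measurable.aestronglyMeasurable (measurable_from_top), ?_⟩
  rw [HasFiniteIntegral, lintegral_countable']
  have heq : ∀ n : ℕ, ‖f n‖ₑ * poissonMeasure μ {n}
      = ENNReal.ofReal (poissonPMFReal μ n * f n) := by
    intro n
    rw [_root_.poissonMeasure_singleton, ENNReal.ofReal_mul poissonPMFReal_nonneg, mul_comm]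
    congr 1
    rw [← ofReal_norm, Real.norm_of_nonneg (hpos n)]
  simp_rw [heq]
  rw [← ENNReal.ofReal_tsum_of_nonneg (fun n => mul_nonneg poissonPMFReal_nonneg (hpos n)) hsum]
  exact ENNReal.ofReal_lt_top

lemma integrable_poisson_df (μ : ℝ≥0) (k : ℕ) :
    Integrable (fun n : ℕ => (n.descFactorial k : ℝ)) (poissonMeasure μ) :=
  integrable_poisson_of_nonneg μ _ (fun _ => Nat.cast_nonneg _) (hasSum_poisson_df μ k).summable

lemma integral_poisson_df (μ : ℝ≥0) (k : ℕ) :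
    ∫ n : ℕ, (n.descFactorial k : ℝ) ∂(poissonMeasure μ) = (μ : ℝ) ^ k := by
  rw [integral_poissonMeasure' (integrable_poisson_df μ k)]
  have h : ∀ n : ℕ, (Real.exp (-(μ : ℝ)) * (μ : ℝ) ^ n / (n.factorial : ℝ)) • ((n.descFactorial k : ℕ) : ℝ)
      = poissonPMFReal μ n * (n.descFactorial k : ℝ) := by
    intro n
    rw [smul_eq_mul]
    rfl
  simp_rw [h]
  exact (hasSum_poisson_df μ k).tsum_eq

lemma integral_prod_poisson {m : ℕ} (μ : Fin m → ℝ≥0) (f : Fin m → ℕ → ℝ) :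
    ∫ x : Fin m → ℕ, ∏ j, f j (x j) ∂(poissonPi μ)
      = ∏ j, ∫ n : ℕ, f j n ∂(poissonMeasure (μ j)) :=
  MeasureTheory.integral_fin_nat_prod_eq_prod (μ := fun j => poissonMeasure (μ j)) f

lemma integrable_prod_poisson {m : ℕ} (μ : Fin m → ℝ≥0) (f : Fin m → ℕ → ℝ)
    (hf : ∀ j, Integrable (f j) (poissonMeasure (μ j))) :
    Integrable (fun x : Fin m → ℕ => ∏ j, f j (x j)) (poissonPi μ) :=
  MeasureTheory.Integrable.fin_nat_prod (μ := fun j => poissonMeasure (μ j)) hf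

lemma df_one (n : ℕ) : ((n.descFactorial 1 : ℕ) : ℝ) = (n : ℝ) := by
  rw [← descPochhammer_eval_eq_descFactorial ℝ]
  simp [descPochhammer_succ_right]

lemma df_two (n : ℕ) : ((n.descFactorial 2 : ℕ) : ℝ) = (n : ℝ) * ((n : ℝ) - 1) := by
  rw [← descPochhammer_eval_eq_descFactorial ℝ]
  simp [descPochhammer_succ_right]

lemma df_three (n : ℕ) :
    ((n.descFactorial 3 : ℕ) : ℝ) = (n : ℝ) * ((n : ℝ) - 1) * ((n : ℝ) - 2) := by
  rw [← descPochhammer_eval_eq_descFactorial ℝ]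
  simp [descPochhammer_succ_right]

lemma df_four (n : ℕ) :
    ((n.descFactorial 4 : ℕ) : ℝ)
      = (n : ℝ) * ((n : ℝ) - 1) * ((n : ℝ) - 2) * ((n : ℝ) - 3) := by
  rw [← descPochhammer_eval_eq_descFactorial ℝ]
  simp [descPochhammer_succ_right]

lemma poisson_poly (μ : ℝ≥0) (f : ℕ → ℝ) (a b c d e : ℝ)
    (hf : ∀ n : ℕ, f n = a + b * (n.descFactorial 1 : ℝ) + c * (n.descFactorial 2 : ℝ)
      + d * (n.descFactorial 3 : ℝ) + e * (n.descFactorial 4 : ℝ)) :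
    Integrable f (poissonMeasure μ) ∧
      ∫ n : ℕ, f n ∂(poissonMeasure μ)
        = a + b * (μ : ℝ) + c * (μ : ℝ) ^ 2 + d * (μ : ℝ) ^ 3 + e * (μ : ℝ) ^ 4 := by
  have i1 := (integrable_poisson_df μ 1).const_mul b
  have i2 := (integrable_poisson_df μ 2).const_mul c
  have i3 := (integrable_poisson_df μ 3).const_mul d
  have i4 := (integrable_poisson_df μ 4).const_mul e
  have i0 : Integrable (fun _ : ℕ => a) (poissonMeasure μ) := integrable_const a
  have hint : Integrable f (poissonMeasure μ) := by
    have := (((i0.add i1).add i2).add i3).add i4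
    exact this.congr (Filter.EventuallyEq.of_eq (funext fun n => (hf n).symm))
  refine ⟨hint, ?_⟩
  have h0 : ∫ n : ℕ, f n ∂(poissonMeasure μ)
      = ∫ n : ℕ, (a + b * (n.descFactorial 1 : ℝ) + c * (n.descFactorial 2 : ℝ)
        + d * (n.descFactorial 3 : ℝ) + e * (n.descFactorial 4 : ℝ)) ∂(poissonMeasure μ) :=
    integral_congr_ae (Filter.EventuallyEq.of_eq (funext hf))
  have e4 : ∫ n : ℕ, (a + b * (n.descFactorial 1 : ℝ) + c * (n.descFactorial 2 : ℝ)
        + d * (n.descFactorial 3 : ℝ) + e * (n.descFactorial 4 : ℝ)) ∂(poissonMeasure μ)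
      = (∫ n : ℕ, (a + b * (n.descFactorial 1 : ℝ) + c * (n.descFactorial 2 : ℝ)
        + d * (n.descFactorial 3 : ℝ)) ∂(poissonMeasure μ))
        + ∫ n : ℕ, e * (n.descFactorial 4 : ℝ) ∂(poissonMeasure μ) :=
    integral_add (((i0.add i1).add i2).add i3) i4
  have e3 : ∫ n : ℕ, (a + b * (n.descFactorial 1 : ℝ) + c * (n.descFactorial 2 : ℝ)
        + d * (n.descFactorial 3 : ℝ)) ∂(poissonMeasure μ)
      = (∫ n : ℕ, (a + b * (n.descFactorial 1 : ℝ)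
        + c * (n.descFactorial 2 : ℝ)) ∂(poissonMeasure μ))
        + ∫ n : ℕ, d * (n.descFactorial 3 : ℝ) ∂(poissonMeasure μ) :=
    integral_add ((i0.add i1).add i2) i3
  have e2 : ∫ n : ℕ, (a + b * (n.descFactorial 1 : ℝ)
        + c * (n.descFactorial 2 : ℝ)) ∂(poissonMeasure μ)
      = (∫ n : ℕ, (a + b * (n.descFactorial 1 : ℝ)) ∂(poissonMeasure μ))
        + ∫ n : ℕ, c * (n.descFactorial 2 : ℝ) ∂(poissonMeasure μ) :=
    integral_add (i0.add i1) i2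
  have e1 : ∫ n : ℕ, (a + b * (n.descFactorial 1 : ℝ)) ∂(poissonMeasure μ)
      = (∫ _n : ℕ, a ∂(poissonMeasure μ))
        + ∫ n : ℕ, b * (n.descFactorial 1 : ℝ) ∂(poissonMeasure μ) :=
    integral_add i0 i1
  rw [h0, e4, e3, e2, e1, integral_const, integral_const_mul, integral_const_mul,
    integral_const_mul, integral_const_mul, integral_poisson_df, integral_poisson_df,
    integral_poisson_df, integral_poisson_df]
  simp [pow_one]

end PoissonAux

section Shapes

noncomputable def sG1 : ℕ → ℝ := fun n => (n : ℝ) * ((n : ℝ) - 1) * ((n : ℝ) - 2)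
noncomputable def sG2 : ℕ → ℝ := fun n => (n : ℝ) * ((n : ℝ) * ((n : ℝ) - 1))
noncomputable def sG3 : ℕ → ℝ := fun n => (n : ℝ) ^ 3
noncomputable def sF1 : ℕ → ℝ := fun n => (n : ℝ) * ((n : ℝ) * ((n : ℝ) - 1) * ((n : ℝ) - 2))
noncomputable def sF2 : ℕ → ℝ := fun n => (n : ℝ) * ((n : ℝ) * ((n : ℝ) * ((n : ℝ) - 1)))
noncomputable def sF3 : ℕ → ℝ := fun n => (n : ℝ) * (n : ℝ) ^ 3
noncomputable def sW1 (c : ℝ) : ℕ → ℝ :=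
  fun n => ((n : ℝ) - c) * ((n : ℝ) * ((n : ℝ) - 1) * ((n : ℝ) - 2))
noncomputable def sW2 (c : ℝ) : ℕ → ℝ :=
  fun n => ((n : ℝ) - c) * ((n : ℝ) * ((n : ℝ) * ((n : ℝ) - 1)))
noncomputable def sW3 (c : ℝ) : ℕ → ℝ := fun n => ((n : ℝ) - c) * (n : ℝ) ^ 3

lemma sh_G1 (μ : ℝ≥0) : Integrable sG1 (poissonMeasure μ) ∧
    ∫ n : ℕ, sG1 n ∂(poissonMeasure μ) = (μ : ℝ) ^ 3 := by
  obtain ⟨hi, hv⟩ := poisson_poly μ sG1 0 0 0 1 0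
    (fun n => by simp only [sG1]; rw [df_one, df_two, df_three, df_four]; ring)
  exact ⟨hi, hv.trans (by ring)⟩

lemma sh_G2 (μ : ℝ≥0) : Integrable sG2 (poissonMeasure μ) ∧
    ∫ n : ℕ, sG2 n ∂(poissonMeasure μ) = (μ : ℝ) ^ 2 * (2 + (μ : ℝ)) := by
  obtain ⟨hi, hv⟩ := poisson_poly μ sG2 0 0 2 1 0
    (fun n => by simp only [sG2]; rw [df_one, df_two, df_three, df_four]; ring)
  exact ⟨hi, hv.trans (by ring)⟩

lemma sh_G3 (μ : ℝ≥0) : Integrable sG3 (poissonMeasure μ) ∧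
    ∫ n : ℕ, sG3 n ∂(poissonMeasure μ) = (μ : ℝ) * (1 + 3 * (μ : ℝ) + (μ : ℝ) ^ 2) := by
  obtain ⟨hi, hv⟩ := poisson_poly μ sG3 0 1 3 1 0
    (fun n => by simp only [sG3]; rw [df_one, df_two, df_three, df_four]; ring)
  exact ⟨hi, hv.trans (by ring)⟩

lemma sh_F1 (μ : ℝ≥0) : Integrable sF1 (poissonMeasure μ) ∧
    ∫ n : ℕ, sF1 n ∂(poissonMeasure μ) = (μ : ℝ) ^ 3 * (3 + (μ : ℝ)) := by
  obtain ⟨hi, hv⟩ := poisson_poly μ sF1 0 0 0 3 1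
    (fun n => by simp only [sF1]; rw [df_one, df_two, df_three, df_four]; ring)
  exact ⟨hi, hv.trans (by ring)⟩

lemma sh_F2 (μ : ℝ≥0) : Integrable sF2 (poissonMeasure μ) ∧
    ∫ n : ℕ, sF2 n ∂(poissonMeasure μ)
      = (μ : ℝ) ^ 2 * (4 + 5 * (μ : ℝ) + (μ : ℝ) ^ 2) := by
  obtain ⟨hi, hv⟩ := poisson_poly μ sF2 0 0 4 5 1
    (fun n => by simp only [sF2]; rw [df_one, df_two, df_three, df_four]; ring)
  exact ⟨hi, hv.trans (by ring)⟩

lemma sh_F3 (μ : ℝ≥0) : Integrable sF3 (poissonMeasure μ) ∧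
    ∫ n : ℕ, sF3 n ∂(poissonMeasure μ)
      = (μ : ℝ) * (1 + 7 * (μ : ℝ) + 6 * (μ : ℝ) ^ 2 + (μ : ℝ) ^ 3) := by
  obtain ⟨hi, hv⟩ := poisson_poly μ sF3 0 1 7 6 1
    (fun n => by simp only [sF3]; rw [df_one, df_two, df_three, df_four]; ring)
  exact ⟨hi, hv.trans (by ring)⟩

lemma sh_W1 (c : ℝ) (μ : ℝ≥0) : Integrable (sW1 c) (poissonMeasure μ) ∧
    ∫ n : ℕ, sW1 c n ∂(poissonMeasure μ) = (μ : ℝ) ^ 4 + (3 - c) * (μ : ℝ) ^ 3 := by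
  obtain ⟨hi, hv⟩ := poisson_poly μ (sW1 c) 0 0 0 (3 - c) 1
    (fun n => by simp only [sW1]; rw [df_one, df_two, df_three, df_four]; ring)
  exact ⟨hi, hv.trans (by ring)⟩

lemma sh_W2 (c : ℝ) (μ : ℝ≥0) : Integrable (sW2 c) (poissonMeasure μ) ∧
    ∫ n : ℕ, sW2 c n ∂(poissonMeasure μ)
      = (μ : ℝ) ^ 4 + (5 - c) * (μ : ℝ) ^ 3 + (4 - 2 * c) * (μ : ℝ) ^ 2 := by
  obtain ⟨hi, hv⟩ := poisson_poly μ (sW2 c) 0 0 (4 - 2 * c) (5 - c) 1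
    (fun n => by simp only [sW2]; rw [df_one, df_two, df_three, df_four]; ring)
  exact ⟨hi, hv.trans (by ring)⟩

lemma sh_W3 (c : ℝ) (μ : ℝ≥0) : Integrable (sW3 c) (poissonMeasure μ) ∧
    ∫ n : ℕ, sW3 c n ∂(poissonMeasure μ)
      = (μ : ℝ) ^ 4 + (6 - c) * (μ : ℝ) ^ 3 + (7 - 3 * c) * (μ : ℝ) ^ 2
        + (1 - c) * (μ : ℝ) := by
  obtain ⟨hi, hv⟩ := poisson_poly μ (sW3 c) 0 (1 - c) (7 - 3 * c) (6 - c) 1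
    (fun n => by simp only [sW3]; rw [df_one, df_two, df_three, df_four]; ring)
  exact ⟨hi, hv.trans (by ring)⟩

end Shapes

section Update

noncomputable def updF {m : ℕ} (g w : ℕ → ℝ) (j : Fin m) : Fin m → ℕ → ℝ :=
  Function.update (fun _ => g) j w

lemma prod_updF {m : ℕ} (g w : ℕ → ℝ) (j : Fin m) (x : Fin m → ℕ) :
    ∏ k, updF g w j k (x k) = w (x j) * ∏ k ∈ univ.erase j, g (x k) := by
  rw [← Finset.mul_prod_erase univ (fun k => updF g w j k (x k)) (Finset.mem_univ j)]
  congr 1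
  · simp [updF]
  · refine Finset.prod_congr rfl fun k hk => ?_
    rw [updF, Function.update_of_ne (Finset.mem_erase.mp hk).1]

lemma prod_updF_integral {m : ℕ} (μ : Fin m → ℝ≥0) (g w : ℕ → ℝ) (j : Fin m) :
    ∏ k, ∫ n : ℕ, updF g w j k n ∂(poissonMeasure (μ k))
      = (∫ n : ℕ, w n ∂(poissonMeasure (μ j)))
        * ∏ k ∈ univ.erase j, ∫ n : ℕ, g n ∂(poissonMeasure (μ k)) := by
  rw [← Finset.mul_prod_erase univ
    (fun k => ∫ n : ℕ, updF g w j k n ∂(poissonMeasure (μ k))) (Finset.mem_univ j)]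
  congr 1
  · simp [updF]
  · refine Finset.prod_congr rfl fun k hk => ?_
    rw [updF, Function.update_of_ne (Finset.mem_erase.mp hk).1]

lemma integrable_updF {m : ℕ} (μ : Fin m → ℝ≥0) (g w : ℕ → ℝ) (j : Fin m)
    (hg : ∀ k : Fin m, Integrable g (poissonMeasure (μ k)))
    (hw : Integrable w (poissonMeasure (μ j))) :
    ∀ k : Fin m, Integrable (updF g w j k) (poissonMeasure (μ k)) := by
  intro k
  rcases eq_or_ne k j with rfl | h
  · simpa [updF] using hw
  · rw [updF, Function.update_of_ne h]
    exact hg k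

end Update

section Comb

lemma main_comb {m : ℕ} (μ : Fin m → ℝ≥0) (a b c : ℝ) (f g h : Fin m → ℕ → ℝ)
    (hf : ∀ j, Integrable (f j) (poissonMeasure (μ j)))
    (hg : ∀ j, Integrable (g j) (poissonMeasure (μ j)))
    (hh : ∀ j, Integrable (h j) (poissonMeasure (μ j))) :
    Integrable (fun x : Fin m → ℕ =>
        a * ∏ j, f j (x j) - b * ∏ j, g j (x j) + c * ∏ j, h j (x j)) (poissonPi μ) ∧
      ∫ x : Fin m → ℕ,
          (a * ∏ j, f j (x j) - b * ∏ j, g j (x j) + c * ∏ j, h j (x j)) ∂(poissonPi μ)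
        = a * ∏ j, (∫ n : ℕ, f j n ∂(poissonMeasure (μ j)))
          - b * ∏ j, (∫ n : ℕ, g j n ∂(poissonMeasure (μ j)))
          + c * ∏ j, (∫ n : ℕ, h j n ∂(poissonMeasure (μ j))) := by
  have If : Integrable (fun x : Fin m → ℕ => a * ∏ j, f j (x j)) (poissonPi μ) :=
    (integrable_prod_poisson μ f hf).const_mul a
  have Ig : Integrable (fun x : Fin m → ℕ => b * ∏ j, g j (x j)) (poissonPi μ) :=
    (integrable_prod_poisson μ g hg).const_mul b
  have Ih : Integrable (fun x : Fin m → ℕ => c * ∏ j, h j (x j)) (poissonPi μ) :=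
    (integrable_prod_poisson μ h hh).const_mul c
  refine ⟨(If.sub Ig).add Ih, ?_⟩
  have eAdd : ∫ x : Fin m → ℕ,
        (a * ∏ j, f j (x j) - b * ∏ j, g j (x j) + c * ∏ j, h j (x j)) ∂(poissonPi μ)
      = (∫ x : Fin m → ℕ, (a * ∏ j, f j (x j) - b * ∏ j, g j (x j)) ∂(poissonPi μ))
        + ∫ x : Fin m → ℕ, c * ∏ j, h j (x j) ∂(poissonPi μ) :=
    integral_add (If.sub Ig) Ih
  have eSub : ∫ x : Fin m → ℕ,
        (a * ∏ j, f j (x j) - b * ∏ j, g j (x j)) ∂(poissonPi μ)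
      = (∫ x : Fin m → ℕ, a * ∏ j, f j (x j) ∂(poissonPi μ))
        - ∫ x : Fin m → ℕ, b * ∏ j, g j (x j) ∂(poissonPi μ) :=
    integral_sub If Ig
  rw [eAdd, eSub, integral_const_mul, integral_const_mul, integral_const_mul,
    integral_prod_poisson, integral_prod_poisson, integral_prod_poisson]

end Comb

theorem expectation_Sdot_eps3 (m : ℕ) (hm : 2 ≤ m) (μ : Fin m → ℝ≥0) (hμ : ∀ j, 0 < μ j) :
    ∫ x : Fin m → ℕ, (∏ j, (x j : ℝ) - (∏ j, (μ j : ℝ)) * (1 + ∑ j, ((μ j : ℝ))⁻¹ * ((x j : ℝ) - (μ j : ℝ)))) * ((1/2 : ℝ) * ∏ j, ((x j : ℝ) * ((x j : ℝ) - 1) * ((x j : ℝ) - 2)) - (3/2 : ℝ) * (∏ j, (x j : ℝ)) * (∏ j, ((x j : ℝ) * ((x j : ℝ) - 1))) + (∏ j, (x j : ℝ)) ^ 3) ∂(poissonPi μ)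
      = (1/2 : ℝ) * (∏ j, (μ j : ℝ)) ^ 3 * ∏ j, (3 + (μ j : ℝ)) - (3/2 : ℝ) * (∏ j, (μ j : ℝ)) ^ 2 * ∏ j, (4 + 5 * (μ j : ℝ) + (μ j : ℝ) ^ 2) + (∏ j, (μ j : ℝ)) * ∏ j, (1 + 7 * (μ j : ℝ) + 6 * (μ j : ℝ) ^ 2 + (μ j : ℝ) ^ 3) - (1/2 : ℝ) * (∏ j, (μ j : ℝ)) ^ 4 + (3/2 : ℝ) * (∏ j, (μ j : ℝ)) ^ 3 * ∏ j, (2 + (μ j : ℝ)) - (∏ j, (μ j : ℝ)) ^ 2 * ∏ j, (1 + 3 * (μ j : ℝ) + (μ j : ℝ) ^ 2) - (3/2 : ℝ) * (∏ j, (μ j : ℝ)) ^ 4 * (∑ j, ((μ j : ℝ))⁻¹) + (3/2 : ℝ) * (∏ j, (μ j : ℝ)) ^ 3 * ∑ j, ((μ j : ℝ))⁻¹ * (4 + 3 * (μ j : ℝ)) * ∏ k ∈ univ.erase j, (2 + (μ k : ℝ)) - (∏ j, (μ j : ℝ)) ^ 2 * ∑ j, ((μ j : ℝ))⁻¹ *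 (1 + 6 * (μ j : ℝ) + 3 * (μ j : ℝ) ^ 2) * ∏ k ∈ univ.erase j, (1 + 3 * (μ k : ℝ) + (μ k : ℝ) ^ 2) := by
  classical
  -- Step 1: pointwise decomposition of the integrand
  have hpt : (fun x : Fin m → ℕ => (∏ j, (x j : ℝ) - (∏ j, (μ j : ℝ)) * (1 + ∑ j, ((μ j : ℝ))⁻¹ * ((x j : ℝ) - (μ j : ℝ)))) * ((1/2 : ℝ) * ∏ j, ((x j : ℝ) * ((x j : ℝ) - 1) * ((x j : ℝ) - 2)) - (3/2 : ℝ) * (∏ j, (x j : ℝ)) * (∏ j, ((x j : ℝ) * ((x j : ℝ) - 1))) + (∏ j, (x j : ℝ)) ^ 3))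
      = fun x : Fin m → ℕ =>
        ((1/2 : ℝ) * ∏ j, sF1 (x j) - (3/2 : ℝ) * ∏ j, sF2 (x j) + (1 : ℝ) * ∏ j, sF3 (x j))
        - ((1/2 * ∏ j, (μ j : ℝ)) * ∏ j, sG1 (x j)
            - (3/2 * ∏ j, (μ j : ℝ)) * ∏ j, sG2 (x j)
            + (∏ j, (μ j : ℝ)) * ∏ j, sG3 (x j))
        - ∑ j, ((1/2 * ((∏ i, (μ i : ℝ)) * ((μ j : ℝ))⁻¹))
              * ∏ k, updF sG1 (sW1 (μ j)) j k (x k)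
            - (3/2 * ((∏ i, (μ i : ℝ)) * ((μ j : ℝ))⁻¹))
              * ∏ k, updF sG2 (sW2 (μ j)) j k (x k)
            + ((∏ i, (μ i : ℝ)) * ((μ j : ℝ))⁻¹)
              * ∏ k, updF sG3 (sW3 (μ j)) j k (x k)) := by
    funext x
    have hPB : (∏ j, (x j : ℝ)) * (∏ j, ((x j : ℝ) * ((x j : ℝ) - 1))) = ∏ j, sG2 (x j) :=
      Finset.prod_mul_distrib.symm
    have hP3 : (∏ j, (x j : ℝ)) ^ 3 = ∏ j, sG3 (x j) :=
      (Finset.prod_pow univ 3 (fun j => (x j : ℝ))).symm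
    have hF1 : ∏ j, sF1 (x j)
        = (∏ j, (x j : ℝ)) * ∏ j, ((x j : ℝ) * ((x j : ℝ) - 1) * ((x j : ℝ) - 2)) :=
      Finset.prod_mul_distrib
    have hF2 : ∏ j, sF2 (x j) = (∏ j, (x j : ℝ)) * ∏ j, sG2 (x j) :=
      Finset.prod_mul_distrib
    have hF3 : ∏ j, sF3 (x j) = (∏ j, (x j : ℝ)) * ∏ j, sG3 (x j) :=
      Finset.prod_mul_distrib
    have hkey : ∀ j : Fin m,
        ((1/2 * ((∏ i, (μ i : ℝ)) * ((μ j : ℝ))⁻¹)) * ∏ k, updF sG1 (sW1 (μ j)) j k (x k)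
          - (3/2 * ((∏ i, (μ i : ℝ)) * ((μ j : ℝ))⁻¹)) * ∏ k, updF sG2 (sW2 (μ j)) j k (x k)
          + ((∏ i, (μ i : ℝ)) * ((μ j : ℝ))⁻¹) * ∏ k, updF sG3 (sW3 (μ j)) j k (x k))
        = (((μ j : ℝ))⁻¹ * ((x j : ℝ) - (μ j : ℝ)))
          * ((∏ i, (μ i : ℝ)) * ((1/2 : ℝ) * ∏ i, sG1 (x i)
            - (3/2 : ℝ) * ∏ i, sG2 (x i) + ∏ i, sG3 (x i))) := by
      intro j
      rw [prod_updF, prod_updF, prod_updF]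
      have h1 : ∏ i, sG1 (x i) = sG1 (x j) * ∏ k ∈ univ.erase j, sG1 (x k) :=
        (Finset.mul_prod_erase univ (fun i => sG1 (x i)) (Finset.mem_univ j)).symm
      have h2 : ∏ i, sG2 (x i) = sG2 (x j) * ∏ k ∈ univ.erase j, sG2 (x k) :=
        (Finset.mul_prod_erase univ (fun i => sG2 (x i)) (Finset.mem_univ j)).symm
      have h3 : ∏ i, sG3 (x i) = sG3 (x j) * ∏ k ∈ univ.erase j, sG3 (x k) :=
        (Finset.mul_prod_erase univ (fun i => sG3 (x i)) (Finset.mem_univ j)).symm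
      rw [h1, h2, h3]
      simp only [sW1, sW2, sW3, sG1, sG2, sG3]
      ring
    have hsum : ∑ j, ((1/2 * ((∏ i, (μ i : ℝ)) * ((μ j : ℝ))⁻¹))
              * ∏ k, updF sG1 (sW1 (μ j)) j k (x k)
            - (3/2 * ((∏ i, (μ i : ℝ)) * ((μ j : ℝ))⁻¹))
              * ∏ k, updF sG2 (sW2 (μ j)) j k (x k)
            + ((∏ i, (μ i : ℝ)) * ((μ j : ℝ))⁻¹)
              * ∏ k, updF sG3 (sW3 (μ j)) j k (x k))
        = (∑ j, ((μ j : ℝ))⁻¹ * ((x j : ℝ) - (μ j : ℝ)))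
          * ((∏ i, (μ i : ℝ)) * ((1/2 : ℝ) * ∏ i, sG1 (x i)
            - (3/2 : ℝ) * ∏ i, sG2 (x i) + ∏ i, sG3 (x i))) := by
      rw [Finset.sum_mul]
      exact Finset.sum_congr rfl fun j _ => hkey j
    rw [hsum]
    simp only [sF1, sF2, sF3, sG1, sG2, sG3] at hF1 hF2 hF3 hPB hP3 ⊢
    linear_combination (-(1/2 : ℝ)) * hF1 + (3/2 : ℝ) * hF2 - hF3
      + ((∏ j, (x j : ℝ)) - (∏ j, (μ j : ℝ))
          - (∏ j, (μ j : ℝ)) * (∑ j, ((μ j : ℝ))⁻¹ * ((x j : ℝ) - (μ j : ℝ))))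
        * ((-(3/2) : ℝ) * hPB + hP3)
  rw [hpt]
  -- Step 2: integrate term by term
  obtain ⟨iT1, vT1⟩ := main_comb μ (1/2) (3/2) 1 (fun _ => sF1) (fun _ => sF2) (fun _ => sF3)
    (fun j => (sh_F1 (μ j)).1) (fun j => (sh_F2 (μ j)).1) (fun j => (sh_F3 (μ j)).1)
  obtain ⟨iT2, vT2⟩ := main_comb μ (1/2 * ∏ j, (μ j : ℝ)) (3/2 * ∏ j, (μ j : ℝ))
    (∏ j, (μ j : ℝ)) (fun _ => sG1) (fun _ => sG2) (fun _ => sG3)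
    (fun j => (sh_G1 (μ j)).1) (fun j => (sh_G2 (μ j)).1) (fun j => (sh_G3 (μ j)).1)
  have hT3 := fun j : Fin m => main_comb μ
    (1/2 * ((∏ i, (μ i : ℝ)) * ((μ j : ℝ))⁻¹)) (3/2 * ((∏ i, (μ i : ℝ)) * ((μ j : ℝ))⁻¹))
    ((∏ i, (μ i : ℝ)) * ((μ j : ℝ))⁻¹)
    (updF sG1 (sW1 (μ j)) j) (updF sG2 (sW2 (μ j)) j) (updF sG3 (sW3 (μ j)) j)
    (integrable_updF μ sG1 (sW1 (μ j)) j (fun k => (sh_G1 (μ k)).1) (sh_W1 (μ j) (μ j)).1)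
    (integrable_updF μ sG2 (sW2 (μ j)) j (fun k => (sh_G2 (μ k)).1) (sh_W2 (μ j) (μ j)).1)
    (integrable_updF μ sG3 (sW3 (μ j)) j (fun k => (sh_G3 (μ k)).1) (sh_W3 (μ j) (μ j)).1)
  have iT3 : ∀ j : Fin m, Integrable (fun x : Fin m → ℕ =>
      (1/2 * ((∏ i, (μ i : ℝ)) * ((μ j : ℝ))⁻¹)) * ∏ k, updF sG1 (sW1 (μ j)) j k (x k)
        - (3/2 * ((∏ i, (μ i : ℝ)) * ((μ j : ℝ))⁻¹)) * ∏ k, updF sG2 (sW2 (μ j)) j k (x k)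
        + ((∏ i, (μ i : ℝ)) * ((μ j : ℝ))⁻¹) * ∏ k, updF sG3 (sW3 (μ j)) j k (x k))
      (poissonPi μ) := fun j => (hT3 j).1
  have iS : Integrable (fun x : Fin m → ℕ => ∑ j,
      ((1/2 * ((∏ i, (μ i : ℝ)) * ((μ j : ℝ))⁻¹)) * ∏ k, updF sG1 (sW1 (μ j)) j k (x k)
        - (3/2 * ((∏ i, (μ i : ℝ)) * ((μ j : ℝ))⁻¹)) * ∏ k, updF sG2 (sW2 (μ j)) j k (x k)
        + ((∏ i, (μ i : ℝ)) * ((μ j : ℝ))⁻¹) * ∏ k, updF sG3 (sW3 (μ j)) j k (x k)))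
      (poissonPi μ) := integrable_finset_sum univ fun j _ => iT3 j
  have eSub2 : ∫ x : Fin m → ℕ, (((1/2 : ℝ) * ∏ j, sF1 (x j) - (3/2 : ℝ) * ∏ j, sF2 (x j)
        + (1 : ℝ) * ∏ j, sF3 (x j))
        - ((1/2 * ∏ j, (μ j : ℝ)) * ∏ j, sG1 (x j)
            - (3/2 * ∏ j, (μ j : ℝ)) * ∏ j, sG2 (x j)
            + (∏ j, (μ j : ℝ)) * ∏ j, sG3 (x j))
        - ∑ j, ((1/2 * ((∏ i, (μ i : ℝ)) * ((μ j : ℝ))⁻¹))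
              * ∏ k, updF sG1 (sW1 (μ j)) j k (x k)
            - (3/2 * ((∏ i, (μ i : ℝ)) * ((μ j : ℝ))⁻¹))
              * ∏ k, updF sG2 (sW2 (μ j)) j k (x k)
            + ((∏ i, (μ i : ℝ)) * ((μ j : ℝ))⁻¹)
              * ∏ k, updF sG3 (sW3 (μ j)) j k (x k))) ∂(poissonPi μ)
      = (∫ x : Fin m → ℕ, (((1/2 : ℝ) * ∏ j, sF1 (x j) - (3/2 : ℝ) * ∏ j, sF2 (x j)
        + (1 : ℝ) * ∏ j, sF3 (x j))
        - ((1/2 * ∏ j, (μ j : ℝ)) * ∏ j, sG1 (x j)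
            - (3/2 * ∏ j, (μ j : ℝ)) * ∏ j, sG2 (x j)
            + (∏ j, (μ j : ℝ)) * ∏ j, sG3 (x j))) ∂(poissonPi μ))
        - ∫ x : Fin m → ℕ, (∑ j, ((1/2 * ((∏ i, (μ i : ℝ)) * ((μ j : ℝ))⁻¹))
              * ∏ k, updF sG1 (sW1 (μ j)) j k (x k)
            - (3/2 * ((∏ i, (μ i : ℝ)) * ((μ j : ℝ))⁻¹))
              * ∏ k, updF sG2 (sW2 (μ j)) j k (x k)
            + ((∏ i, (μ i : ℝ)) * ((μ j : ℝ))⁻¹)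
              * ∏ k, updF sG3 (sW3 (μ j)) j k (x k))) ∂(poissonPi μ) :=
    integral_sub (iT1.sub iT2) iS
  have eSub1 : ∫ x : Fin m → ℕ, (((1/2 : ℝ) * ∏ j, sF1 (x j) - (3/2 : ℝ) * ∏ j, sF2 (x j)
        + (1 : ℝ) * ∏ j, sF3 (x j))
        - ((1/2 * ∏ j, (μ j : ℝ)) * ∏ j, sG1 (x j)
            - (3/2 * ∏ j, (μ j : ℝ)) * ∏ j, sG2 (x j)
            + (∏ j, (μ j : ℝ)) * ∏ j, sG3 (x j))) ∂(poissonPi μ)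
      = (∫ x : Fin m → ℕ, ((1/2 : ℝ) * ∏ j, sF1 (x j) - (3/2 : ℝ) * ∏ j, sF2 (x j)
        + (1 : ℝ) * ∏ j, sF3 (x j)) ∂(poissonPi μ))
        - ∫ x : Fin m → ℕ, ((1/2 * ∏ j, (μ j : ℝ)) * ∏ j, sG1 (x j)
            - (3/2 * ∏ j, (μ j : ℝ)) * ∏ j, sG2 (x j)
            + (∏ j, (μ j : ℝ)) * ∏ j, sG3 (x j)) ∂(poissonPi μ) :=
    integral_sub iT1 iT2
  have eS : ∫ x : Fin m → ℕ, (∑ j, ((1/2 * ((∏ i, (μ i : ℝ)) * ((μ j : ℝ))⁻¹))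
              * ∏ k, updF sG1 (sW1 (μ j)) j k (x k)
            - (3/2 * ((∏ i, (μ i : ℝ)) * ((μ j : ℝ))⁻¹))
              * ∏ k, updF sG2 (sW2 (μ j)) j k (x k)
            + ((∏ i, (μ i : ℝ)) * ((μ j : ℝ))⁻¹)
              * ∏ k, updF sG3 (sW3 (μ j)) j k (x k))) ∂(poissonPi μ)
      = ∑ j, ∫ x : Fin m → ℕ, ((1/2 * ((∏ i, (μ i : ℝ)) * ((μ j : ℝ))⁻¹))
              * ∏ k, updF sG1 (sW1 (μ j)) j k (x k)
            - (3/2 * ((∏ i, (μ i : ℝ)) * ((μ j : ℝ))⁻¹))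
              * ∏ k, updF sG2 (sW2 (μ j)) j k (x k)
            + ((∏ i, (μ i : ℝ)) * ((μ j : ℝ))⁻¹)
              * ∏ k, updF sG3 (sW3 (μ j)) j k (x k)) ∂(poissonPi μ) :=
    integral_finset_sum univ fun j _ => iT3 j
  rw [eSub2, eSub1, eS, vT1, vT2]
  -- Step 3: evaluate the one-dimensional integrals
  have pF1 : ∏ j, ∫ n : ℕ, sF1 n ∂(poissonMeasure (μ j))
      = ∏ j, ((μ j : ℝ) ^ 3 * (3 + (μ j : ℝ))) :=
    Finset.prod_congr rfl fun j _ => (sh_F1 (μ j)).2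
  have pF2 : ∏ j, ∫ n : ℕ, sF2 n ∂(poissonMeasure (μ j))
      = ∏ j, ((μ j : ℝ) ^ 2 * (4 + 5 * (μ j : ℝ) + (μ j : ℝ) ^ 2)) :=
    Finset.prod_congr rfl fun j _ => (sh_F2 (μ j)).2
  have pF3 : ∏ j, ∫ n : ℕ, sF3 n ∂(poissonMeasure (μ j))
      = ∏ j, ((μ j : ℝ) * (1 + 7 * (μ j : ℝ) + 6 * (μ j : ℝ) ^ 2 + (μ j : ℝ) ^ 3)) :=
    Finset.prod_congr rfl fun j _ => (sh_F3 (μ j)).2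
  have pG1 : ∏ j, ∫ n : ℕ, sG1 n ∂(poissonMeasure (μ j)) = ∏ j, (μ j : ℝ) ^ 3 :=
    Finset.prod_congr rfl fun j _ => (sh_G1 (μ j)).2
  have pG2 : ∏ j, ∫ n : ℕ, sG2 n ∂(poissonMeasure (μ j))
      = ∏ j, ((μ j : ℝ) ^ 2 * (2 + (μ j : ℝ))) :=
    Finset.prod_congr rfl fun j _ => (sh_G2 (μ j)).2
  have pG3 : ∏ j, ∫ n : ℕ, sG3 n ∂(poissonMeasure (μ j))
      = ∏ j, ((μ j : ℝ) * (1 + 3 * (μ j : ℝ) + (μ j : ℝ) ^ 2)) :=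
    Finset.prod_congr rfl fun j _ => (sh_G3 (μ j)).2
  -- Step 4: evaluate the per-j integrals
  have hval : ∀ j : Fin m,
      (∫ x : Fin m → ℕ, ((1/2 * ((∏ i, (μ i : ℝ)) * ((μ j : ℝ))⁻¹))
              * ∏ k, updF sG1 (sW1 (μ j)) j k (x k)
            - (3/2 * ((∏ i, (μ i : ℝ)) * ((μ j : ℝ))⁻¹))
              * ∏ k, updF sG2 (sW2 (μ j)) j k (x k)
            + ((∏ i, (μ i : ℝ)) * ((μ j : ℝ))⁻¹)
              * ∏ k, updF sG3 (sW3 (μ j)) j k (x k)) ∂(poissonPi μ))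
      = 3/2 * (∏ i, (μ i : ℝ)) ^ 4 * ((μ j : ℝ))⁻¹
        - 3/2 * (∏ i, (μ i : ℝ)) ^ 3
          * (((μ j : ℝ))⁻¹ * (4 + 3 * (μ j : ℝ)) * ∏ k ∈ univ.erase j, (2 + (μ k : ℝ)))
        + (∏ i, (μ i : ℝ)) ^ 2
          * (((μ j : ℝ))⁻¹ * (1 + 6 * (μ j : ℝ) + 3 * (μ j : ℝ) ^ 2)
            * ∏ k ∈ univ.erase j, (1 + 3 * (μ k : ℝ) + (μ k : ℝ) ^ 2)) := by
    intro j
    rw [(hT3 j).2, prod_updF_integral, prod_updF_integral, prod_updF_integral,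
      (sh_W1 (μ j) (μ j)).2, (sh_W2 (μ j) (μ j)).2, (sh_W3 (μ j) (μ j)).2]
    have q1 : ∏ k ∈ univ.erase j, ∫ n : ℕ, sG1 n ∂(poissonMeasure (μ k))
        = ∏ k ∈ univ.erase j, (μ k : ℝ) ^ 3 :=
      Finset.prod_congr rfl fun k _ => (sh_G1 (μ k)).2
    have q2 : ∏ k ∈ univ.erase j, ∫ n : ℕ, sG2 n ∂(poissonMeasure (μ k))
        = ∏ k ∈ univ.erase j, ((μ k : ℝ) ^ 2 * (2 + (μ k : ℝ))) :=
      Finset.prod_congr rfl fun k _ => (sh_G2 (μ k)).2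
    have q3 : ∏ k ∈ univ.erase j, ∫ n : ℕ, sG3 n ∂(poissonMeasure (μ k))
        = ∏ k ∈ univ.erase j, ((μ k : ℝ) * (1 + 3 * (μ k : ℝ) + (μ k : ℝ) ^ 2)) :=
      Finset.prod_congr rfl fun k _ => (sh_G3 (μ k)).2
    have hU : ∏ i, (μ i : ℝ) = (μ j : ℝ) * ∏ k ∈ univ.erase j, (μ k : ℝ) :=
      (Finset.mul_prod_erase univ (fun i => (μ i : ℝ)) (Finset.mem_univ j)).symm
    have r1 : ∏ k ∈ univ.erase j, (μ k : ℝ) ^ 3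
        = (∏ k ∈ univ.erase j, (μ k : ℝ)) ^ 3 :=
      Finset.prod_pow (univ.erase j) 3 (fun k => (μ k : ℝ))
    have r2 : ∏ k ∈ univ.erase j, ((μ k : ℝ) ^ 2 * (2 + (μ k : ℝ)))
        = (∏ k ∈ univ.erase j, (μ k : ℝ)) ^ 2 * ∏ k ∈ univ.erase j, (2 + (μ k : ℝ)) := by
      rw [Finset.prod_mul_distrib, Finset.prod_pow]
    have r3 : ∏ k ∈ univ.erase j, ((μ k : ℝ) * (1 + 3 * (μ k : ℝ) + (μ k : ℝ) ^ 2))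
        = (∏ k ∈ univ.erase j, (μ k : ℝ))
          * ∏ k ∈ univ.erase j, (1 + 3 * (μ k : ℝ) + (μ k : ℝ) ^ 2) :=
      Finset.prod_mul_distrib
    rw [q1, q2, q3, hU, r1, r2, r3]
    ring
  have hS2 : (∑ j, ∫ x : Fin m → ℕ, ((1/2 * ((∏ i, (μ i : ℝ)) * ((μ j : ℝ))⁻¹))
              * ∏ k, updF sG1 (sW1 (μ j)) j k (x k)
            - (3/2 * ((∏ i, (μ i : ℝ)) * ((μ j : ℝ))⁻¹))
              * ∏ k, updF sG2 (sW2 (μ j)) j k (x k)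
            + ((∏ i, (μ i : ℝ)) * ((μ j : ℝ))⁻¹)
              * ∏ k, updF sG3 (sW3 (μ j)) j k (x k)) ∂(poissonPi μ))
      = 3/2 * (∏ i, (μ i : ℝ)) ^ 4 * ∑ j, ((μ j : ℝ))⁻¹
        - 3/2 * (∏ i, (μ i : ℝ)) ^ 3
          * ∑ j, (((μ j : ℝ))⁻¹ * (4 + 3 * (μ j : ℝ)) * ∏ k ∈ univ.erase j, (2 + (μ k : ℝ)))
        + (∏ i, (μ i : ℝ)) ^ 2
          * ∑ j, (((μ j : ℝ))⁻¹ * (1 + 6 * (μ j : ℝ) + 3 * (μ j : ℝ) ^ 2)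
            * ∏ k ∈ univ.erase j, (1 + 3 * (μ k : ℝ) + (μ k : ℝ) ^ 2)) := by
    rw [Finset.sum_congr rfl fun j _ => hval j, Finset.sum_add_distrib,
      Finset.sum_sub_distrib, ← Finset.mul_sum, ← Finset.mul_sum, ← Finset.mul_sum]
  rw [hS2, pF1, pF2, pF3, pG1, pG2, pG3]
  -- Step 5: final algebra
  have t1 : ∏ j, ((μ j : ℝ) ^ 3 * (3 + (μ j : ℝ)))
      = (∏ j, (μ j : ℝ)) ^ 3 * ∏ j, (3 + (μ j : ℝ)) := by
    rw [Finset.prod_mul_distrib, Finset.prod_pow]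
  have t2 : ∏ j, ((μ j : ℝ) ^ 2 * (4 + 5 * (μ j : ℝ) + (μ j : ℝ) ^ 2))
      = (∏ j, (μ j : ℝ)) ^ 2 * ∏ j, (4 + 5 * (μ j : ℝ) + (μ j : ℝ) ^ 2) := by
    rw [Finset.prod_mul_distrib, Finset.prod_pow]
  have t3 : ∏ j, ((μ j : ℝ) * (1 + 7 * (μ j : ℝ) + 6 * (μ j : ℝ) ^ 2 + (μ j : ℝ) ^ 3))
      = (∏ j, (μ j : ℝ)) * ∏ j, (1 + 7 * (μ j : ℝ) + 6 * (μ j : ℝ) ^ 2 + (μ j : ℝ) ^ 3) :=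
    Finset.prod_mul_distrib
  have t4 : ∏ j, (μ j : ℝ) ^ 3 = (∏ j, (μ j : ℝ)) ^ 3 :=
    Finset.prod_pow univ 3 (fun j => (μ j : ℝ))
  have t5 : ∏ j, ((μ j : ℝ) ^ 2 * (2 + (μ j : ℝ)))
      = (∏ j, (μ j : ℝ)) ^ 2 * ∏ j, (2 + (μ j : ℝ)) := by
    rw [Finset.prod_mul_distrib, Finset.prod_pow]
  have t6 : ∏ j, ((μ j : ℝ) * (1 + 3 * (μ j : ℝ) + (μ j : ℝ) ^ 2))
      = (∏ j, (μ j : ℝ)) * ∏ j, (1 + 3 * (μ j : ℝ) + (μ j : ℝ) ^ 2) :=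
    Finset.prod_mul_distrib
  rw [t1, t2, t3, t4, t5, t6]
  ring
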